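/- Every permutation w of {1,…,n} admits a unique decomposition w = v₁v₂⋯v_k into maximal runs where each vᵢ is a contiguous subword that is an increasing or decreasing sequence of consecutive integers, with k minimal; moreover this minimal decomposition is unique. -/

import Mathlib

/-- A nonempty word which is an increasing or a decreasing run of consecutive
integers. -/
def RunWord (v : List ℕ) : Prop :=
  v ≠ [] ∧ ((∃ m : ℕ, v = List.range' m v.length) ∨
    (∃ m : ℕ, v = (List.range' m v.length).reverse))

/-- `L` is a decomposition of `w` into increasing-or-decreasing
consecutive-integer runs. -/
def RunDecomp (w : List ℕ) (L : List (List ℕ)) : Prop :=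
  L.flatten = w ∧ ∀ v ∈ L, RunWord v

/-- Two naturals are neighbours if they differ by exactly one. -/
def Nbr (a b : ℕ) : Prop := b = a + 1 ∨ a = b + 1

instance : ∀ a b : ℕ, Decidable (Nbr a b) := fun a b => by unfold Nbr; infer_instance

/-- Number of "bad" adjacent pairs (not differing by one). -/
def bc : List ℕ → ℕ
  | a :: b :: t => (if Nbr a b then 0 else 1) + bc (b :: t)
  | _ => 0

theorem bc_nil : bc [] = 0 := rfl
theorem bc_single (a : ℕ) : bc [a] = 0 := rfl
theorem bc_cons_cons (a b : ℕ) (t : List ℕ) :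
    bc (a :: b :: t) = (if Nbr a b then 0 else 1) + bc (b :: t) := rfl
theorem chain'_inc_range' (k m : ℕ) :
    List.IsChain (fun a b => b = a + 1) (List.range' m k) := by
  induction k generalizing m with
  | zero => simp
  | succ k ih =>
    rw [List.range'_succ, List.isChain_cons]
    refine ⟨?_, ih (m + 1)⟩
    intro y hy
    cases k with
    | zero => simp at hy
    | succ k => rw [List.range'_succ] at hy; simp at hy; omega

theorem eq_range'_of_chain'_inc : ∀ (t : List ℕ) (a : ℕ),
    List.IsChain (fun a b => b = a + 1) (a :: t) → a :: t = List.range' a (a :: t).length := by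
  intro t
  induction t with
  | nil => intro a _; simp
  | cons b t ih =>
    intro a h
    rw [List.isChain_cons_cons] at h
    have h2 := ih b h.2
    have hb : b = a + 1 := h.1
    subst hb
    simp only [List.length_cons] at h2 ⊢
    rw [List.range'_succ, ← h2]

theorem runWord_iff (v : List ℕ) : RunWord v ↔ v ≠ [] ∧
    (List.IsChain (fun a b => b = a + 1) v ∨ List.IsChain (fun a b => a = b + 1) v) := by
  constructor
  · rintro ⟨hne, ⟨m, hm⟩ | ⟨m, hm⟩⟩
    · exact ⟨hne, Or.inl (hm ▸ chain'_inc_range' _ _)⟩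
    · refine ⟨hne, Or.inr ?_⟩
      have hrev : v.reverse = List.range' m v.length := by
        conv_lhs => rw [hm, List.reverse_reverse]
      have : List.IsChain (fun a b => b = a + 1) v.reverse := by
        rw [hrev]; exact chain'_inc_range' _ _
      rw [List.isChain_reverse] at this
      exact this
  · rintro ⟨hne, h | h⟩
    · refine ⟨hne, Or.inl ?_⟩
      cases v with
      | nil => exact absurd rfl hne
      | cons a t => exact ⟨a, eq_range'_of_chain'_inc t a h⟩
    · refine ⟨hne, Or.inr ?_⟩
      have : List.IsChain (fun a b => b = a + 1) v.reverse := by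
        rw [List.isChain_reverse]; exact h
      cases hv : v.reverse with
      | nil => simp at hv; exact absurd hv hne
      | cons a t =>
        rw [hv] at this
        have h2 := eq_range'_of_chain'_inc t a this
        refine ⟨a, ?_⟩
        have : v.reverse = List.range' a v.length := by
          rw [hv, h2, ← hv]; simp
        rw [← this, List.reverse_reverse]

theorem chain'_nbr_of_runWord {v : List ℕ} (h : RunWord v) : List.IsChain Nbr v := by
  rcases (runWord_iff v).1 h with ⟨-, h | h⟩
  · exact List.IsChain.imp (fun a b hab => Or.inl hab) h
  · exact List.IsChain.imp (fun a b hab => Or.inr hab) h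

theorem chain'_dir_of_nodup : ∀ (v : List ℕ), v.Nodup → List.IsChain Nbr v →
    List.IsChain (fun a b => b = a + 1) v ∨ List.IsChain (fun a b => a = b + 1) v := by
  intro v
  induction v with
  | nil => intro _ _; left; simp
  | cons a v ih =>
    intro hnd hc
    cases v with
    | nil => left; simp
    | cons b t =>
      rw [List.isChain_cons_cons] at hc
      have hrec := ih (List.Nodup.of_cons hnd) hc.2
      cases t with
      | nil =>
        rcases hc.1 with h | h
        · left; simp [List.isChain_cons_cons, h]
        · right; simp [List.isChain_cons_cons, h]
      | cons c t' =>
        have hac : a ≠ c := by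
          intro h
          have : a ∉ b :: c :: t' := (List.nodup_cons.mp hnd).1
          exact this (by simp [h])
        rcases hrec with hi | hd
        · have hbc : c = b + 1 := (List.isChain_cons_cons.mp hi).1
          rcases hc.1 with h | h
          · exact Or.inl (List.isChain_cons_cons.mpr ⟨h, hi⟩)
          · exact absurd (by omega : a = c) hac
        · have hbc : b = c + 1 := (List.isChain_cons_cons.mp hd).1
          rcases hc.1 with h | h
          · exact absurd (by omega : a = c) hac
          · exact Or.inr (List.isChain_cons_cons.mpr ⟨h, hd⟩)

theorem bc_eq_zero_iff : ∀ (l : List ℕ), bc l = 0 ↔ List.IsChain Nbr l := by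
  intro l
  induction l with
  | nil => simp [bc]
  | cons a t ih =>
    cases t with
    | nil => simp [bc]
    | cons b t' =>
      rw [bc_cons_cons, List.isChain_cons_cons, ← ih]
      split <;> simp_all

theorem bc_append_cons (v : List ℕ) : ∀ (b : ℕ) (t : List ℕ),
    bc (v ++ b :: t) = bc (v ++ [b]) + bc (b :: t) := by
  induction v with
  | nil => intro b t; simp [bc]
  | cons a v ih =>
    intro b t
    cases v with
    | nil =>
      simp only [List.cons_append, List.nil_append, bc_cons_cons, bc_single]
      omega
    | cons c v' =>
      have h := ih b t
      simp only [List.cons_append] at h ⊢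
      rw [bc_cons_cons, bc_cons_cons]
      omega

theorem bc_append_single_le (v : List ℕ) (b : ℕ) : bc (v ++ [b]) ≤ bc v + 1 := by
  induction v with
  | nil => simp [bc]
  | cons a v ih =>
    cases v with
    | nil =>
      simp only [List.cons_append, List.nil_append, bc_cons_cons, bc_single, bc_nil]
      split <;> omega
    | cons c v' =>
      simp only [List.cons_append] at ih ⊢
      rw [bc_cons_cons, bc_cons_cons]
      omega
/-- Split off the maximal initial neighbour-chain. -/
def splitRun : List ℕ → List ℕ × List ℕ
  | [] => ([], [])
  | [a] => ([a], [])
  | a :: b :: t =>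
    if Nbr a b then ((a :: (splitRun (b :: t)).1), (splitRun (b :: t)).2)
    else ([a], b :: t)

theorem splitRun_append : ∀ (l : List ℕ), (splitRun l).1 ++ (splitRun l).2 = l := by
  intro l
  match l with
  | [] => rfl
  | [a] => rfl
  | a :: b :: t =>
    rw [splitRun]
    split
    · simp [splitRun_append (b :: t)]
    · simp

theorem splitRun_fst_ne (a : ℕ) (t : List ℕ) : (splitRun (a :: t)).1 ≠ [] := by
  cases t with
  | nil => simp [splitRun]
  | cons b t => rw [splitRun]; split <;> simp

theorem splitRun_fst_head (a : ℕ) (t : List ℕ) : (splitRun (a :: t)).1.head? = some a := by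
  cases t with
  | nil => simp [splitRun]
  | cons b t => rw [splitRun]; split <;> simp

theorem splitRun_snd_lt (a : ℕ) (t : List ℕ) :
    (splitRun (a :: t)).2.length < (a :: t).length := by
  have h := splitRun_append (a :: t)
  have h2 := splitRun_fst_ne a t
  have := congrArg List.length h
  rw [List.length_append] at this
  have : 0 < (splitRun (a :: t)).1.length := List.length_pos_iff.mpr h2
  omega

theorem splitRun_chain : ∀ (l : List ℕ), List.IsChain Nbr (splitRun l).1 := by
  intro l
  match l with
  | [] => simp [splitRun]
  | [a] => simp [splitRun]
  | a :: b :: t =>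
    rw [splitRun]
    split
    · rename_i h
      have := splitRun_chain (b :: t)
      simp only
      rw [List.isChain_cons]
      refine ⟨?_, this⟩
      intro y hy
      rw [splitRun_fst_head b t] at hy
      simp at hy
      rw [← hy]; exact h
    · simp

theorem splitRun_bc : ∀ (l : List ℕ), (splitRun l).2 ≠ [] → bc l = 1 + bc (splitRun l).2 := by
  intro l
  match l with
  | [] => intro h; simp [splitRun] at h
  | [a] => intro h; simp [splitRun] at h
  | a :: b :: t =>
    intro h
    by_cases hnbr : Nbr a b
    · rw [splitRun, if_pos hnbr] at h ⊢
      simp only at h ⊢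
      rw [bc_cons_cons, if_pos hnbr, splitRun_bc (b :: t) h]
      omega
    · rw [splitRun, if_neg hnbr]
      simp only
      rw [bc_cons_cons, if_neg hnbr]

theorem prefix_chain_length_le : ∀ (l p : List ℕ), p <+: l → List.IsChain Nbr p →
    p.length ≤ (splitRun l).1.length := by
  intro l
  match l with
  | [] => intro p hp _; simp [List.prefix_nil.mp hp, splitRun]
  | [a] =>
    intro p hp _
    have := hp.length_le
    simpa [splitRun] using this
  | a :: b :: t =>
    intro p hp hc
    rw [splitRun]
    split
    · rename_i hnbr
      simp only [List.length_cons]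
      match p, hp with
      | [], _ => simp
      | a' :: p', hp =>
        obtain ⟨q, hq⟩ := hp
        simp only [List.cons_append] at hq
        have hp' : p' <+: b :: t := ⟨q, by injection hq⟩
        have := prefix_chain_length_le (b :: t) p' hp' (List.IsChain.tail hc)
        simp only [List.length_cons]
        omega
    · rename_i hnbr
      match p, hp with
      | [], _ => simp
      | [a'], _ => simp
      | a' :: b' :: p', hp =>
        exfalso
        obtain ⟨q, hq⟩ := hp
        simp only [List.cons_append] at hq
        injection hq with h1 hq; injection hq with h2 hq
        subst h1; subst h2
        exact hnbr (List.isChain_cons_cons.mp hc).1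

/-- Greedy decomposition into maximal neighbour-chains. -/
def greedy : List ℕ → List (List ℕ)
  | [] => []
  | a :: t => (splitRun (a :: t)).1 :: greedy (splitRun (a :: t)).2
termination_by l => l.length
decreasing_by exact splitRun_snd_lt a t

theorem greedy_flatten : ∀ (l : List ℕ), (greedy l).flatten = l := by
  intro l
  match l with
  | [] => simp [greedy]
  | a :: t =>
    rw [greedy]
    have : (splitRun (a :: t)).2.length < t.length + 1 := splitRun_snd_lt a t
    rw [List.flatten_cons, greedy_flatten (splitRun (a :: t)).2, splitRun_append]
termination_by l => l.length

theorem greedy_mem : ∀ (l : List ℕ), ∀ v ∈ greedy l, List.IsChain Nbr v ∧ v ≠ [] := by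
  intro l
  match l with
  | [] => simp [greedy]
  | a :: t =>
    intro v hv
    rw [greedy] at hv
    have hlt : (splitRun (a :: t)).2.length < t.length + 1 := splitRun_snd_lt a t
    rcases List.mem_cons.mp hv with h | h
    · subst h; exact ⟨splitRun_chain _, splitRun_fst_ne a t⟩
    · exact greedy_mem (splitRun (a :: t)).2 v h
termination_by l => l.length

theorem greedy_length : ∀ (l : List ℕ), l ≠ [] → (greedy l).length = bc l + 1 := by
  intro l
  match l with
  | [] => intro h; exact absurd rfl h
  | a :: t =>
    intro _
    rw [greedy]
    have hlt : (splitRun (a :: t)).2.length < t.length + 1 := splitRun_snd_lt a t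
    by_cases hs : (splitRun (a :: t)).2 = []
    · rw [hs]
      have hl : a :: t = (splitRun (a :: t)).1 := by
        conv_lhs => rw [← splitRun_append (a :: t)]
        rw [hs, List.append_nil]
      have : bc (a :: t) = 0 := by
        rw [bc_eq_zero_iff, hl]; exact splitRun_chain _
      simp [greedy, this]
    · rw [List.length_cons, greedy_length _ hs, splitRun_bc (a :: t) hs]
      omega
termination_by l => l.length
theorem lb : ∀ (L : List (List ℕ)) (w : List ℕ),
    (∀ v ∈ L, List.IsChain Nbr v) → L.flatten = w → w ≠ [] → bc w + 1 ≤ L.length := by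
  intro L
  induction L with
  | nil =>
    intro w _ hfl hne
    simp only [List.flatten_nil] at hfl
    exact absurd hfl.symm hne
  | cons v L₂ ih =>
    intro w hc hfl hne
    rw [List.flatten_cons] at hfl
    cases hr : L₂.flatten with
    | nil =>
      have hw : w = v := by rw [← hfl, hr, List.append_nil]
      have : bc w = 0 := by rw [hw, bc_eq_zero_iff]; exact hc v (by simp)
      simp [this]
    | cons b t =>
      rw [hr] at hfl
      have h1 : bc w = bc (v ++ [b]) + bc (b :: t) := by
        rw [← hfl]; exact bc_append_cons v b t
      have h2 : bc (v ++ [b]) ≤ bc v + 1 := bc_append_single_le v b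
      have h3 : bc v = 0 := (bc_eq_zero_iff v).mpr (hc v (by simp))
      have h4 := ih (b :: t) (fun v' hv' => hc v' (by simp [hv'])) hr (by simp)
      simp only [List.length_cons]
      omega

theorem uniq : ∀ (L : List (List ℕ)) (w : List ℕ), w ≠ [] →
    (∀ v ∈ L, List.IsChain Nbr v ∧ v ≠ []) → L.flatten = w → L.length = bc w + 1 →
    L = greedy w := by
  intro L
  induction L with
  | nil =>
    intro w hne _ hfl _
    simp only [List.flatten_nil] at hfl
    exact absurd hfl.symm hne
  | cons v L₂ ih =>
    intro w hne hb hfl hlen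
    cases w with
    | nil => exact absurd rfl hne
    | cons a t =>
      have hgs : (splitRun (a :: t)).1 ++ (splitRun (a :: t)).2 = a :: t :=
        splitRun_append _
      rw [List.flatten_cons] at hfl
      have hvpre : v <+: a :: t := ⟨L₂.flatten, hfl⟩
      have hgpre : (splitRun (a :: t)).1 <+: a :: t := ⟨(splitRun (a :: t)).2, hgs⟩
      have hvchain := (hb v (by simp)).1
      have hle : v.length ≤ (splitRun (a :: t)).1.length :=
        prefix_chain_length_le (a :: t) v hvpre hvchain
      have hge : (splitRun (a :: t)).1.length ≤ v.length := by
        by_contra hlt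
        push_neg at hlt
        cases hr : L₂.flatten with
        | nil =>
          rw [hr, List.append_nil] at hfl
          have h6 := hgpre.length_le
          have h7 := congrArg List.length hfl
          simp only [List.length_cons] at h6 h7 ⊢
          omega
        | cons b tr =>
          rw [hr] at hfl
          have h1 : bc (a :: t) = bc (v ++ [b]) + bc (b :: tr) := by
            rw [← hfl]; exact bc_append_cons v b tr
          have h4 := lb L₂ (b :: tr) (fun v' hv' => (hb v' (by simp [hv'])).1) hr (by simp)
          have hlen' : L₂.length = bc (a :: t) := by
            simp only [List.length_cons] at hlen; omega
          have h5 : 1 ≤ bc (v ++ [b]) := by omega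
          have hvb : v ++ [b] <+: a :: t := by
            refine ⟨tr, ?_⟩
            rw [List.append_assoc]
            simpa using hfl
          have hvbg : v ++ [b] <+: (splitRun (a :: t)).1 :=
            List.prefix_of_prefix_length_le hvb hgpre (by simp; omega)
          have h7 : bc (v ++ [b]) = 0 :=
            (bc_eq_zero_iff _).mpr ((splitRun_chain (a :: t)).prefix hvbg)
          omega
      have hveq : v = (splitRun (a :: t)).1 :=
        (List.prefix_of_prefix_length_le hvpre hgpre hle).eq_of_length
          (le_antisymm hle hge)
      have hgs' : v ++ (splitRun (a :: t)).2 = a :: t := by rw [hveq]; exact hgs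
      have hrs : L₂.flatten = (splitRun (a :: t)).2 :=
        List.append_cancel_left (hfl.trans hgs'.symm)
      rw [greedy, ← hveq]
      by_cases hsnil : (splitRun (a :: t)).2 = []
      · rw [hsnil] at hrs
        cases L₂ with
        | nil => simp [hsnil, greedy]
        | cons u L' =>
          exfalso
          rw [List.flatten_eq_nil_iff] at hrs
          exact (hb u (by simp)).2 (hrs u (by simp))
      · have hbc : bc (a :: t) = 1 + bc (splitRun (a :: t)).2 := splitRun_bc _ hsnil
        have hlen2 : L₂.length = bc (splitRun (a :: t)).2 + 1 := by
          simp only [List.length_cons] at hlen; omega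
        rw [ih (splitRun (a :: t)).2 hsnil (fun v' hv' => hb v' (by simp [hv'])) hrs hlen2]

/-- Every permutation of `{1, …, n}` admits a unique decomposition of minimal
length into contiguous increasing-or-decreasing runs of consecutive integers. -/
theorem stmt15 (n : ℕ) (hn : 1 ≤ n) (w : List ℕ) (hw : w.Perm (List.range' 1 n)) :
    ∃! L : List (List ℕ), RunDecomp w L ∧
      ∀ L' : List (List ℕ), RunDecomp w L' → L.length ≤ L'.length := by
  have hlen : w.length = n := by rw [hw.length_eq, List.length_range']
  have hwne : w ≠ [] := by
    intro h; rw [h] at hlen; simp at hlen; omega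
  have hnd : w.Nodup := hw.nodup_iff.mpr (List.nodup_range' (s := 1) (n := n))
  have hdecomp : RunDecomp w (greedy w) := by
    refine ⟨greedy_flatten w, ?_⟩
    intro v hv
    obtain ⟨hchain, hne⟩ := greedy_mem w v hv
    have hsub : List.Sublist v w := by
      have := List.sublist_flatten_of_mem hv
      rwa [greedy_flatten w] at this
    exact (runWord_iff v).mpr ⟨hne, chain'_dir_of_nodup v (hnd.sublist hsub) hchain⟩
  have hmin : ∀ L', RunDecomp w L' → (greedy w).length ≤ L'.length := by
    rintro L' ⟨hfl, hrw⟩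
    rw [greedy_length w hwne]
    exact lb L' w (fun v hv => chain'_nbr_of_runWord (hrw v hv)) hfl hwne
  refine ⟨greedy w, ⟨hdecomp, hmin⟩, ?_⟩
  rintro L ⟨⟨hfl, hrw⟩, hLmin⟩
  have h1 : L.length ≤ (greedy w).length := hLmin (greedy w) hdecomp
  have h2 : bc w + 1 ≤ L.length :=
    lb L w (fun v hv => chain'_nbr_of_runWord (hrw v hv)) hfl hwne
  have h3 : L.length = bc w + 1 := by rw [greedy_length w hwne] at h1; omega
  exact uniq L w hwne (fun v hv => ⟨chain'_nbr_of_runWord (hrw v hv), (hrw v hv).1⟩) hfl h3
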